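/- Let X be a compact metric space, O ⊆ X a compact subset, and f, g homeomorphisms of X whose support supp(g,f) (the closure of {x : f(x) ≠ g(x)}) is contained in O. Then O is an attracting set for f if and only if O is an attracting set for g. -/
import Mathlib

open Set Topology

/-- Let `O` be a compact subset and `f, g` homeomorphisms whose support
`supp(g,f) = closure {x | f x ≠ g x}` is contained in `O`.  Then `O` is an attracting set
for `f` if and only if it is an attracting set for `g`. -/
theorem attracting_iff_of_supp_subset
    {X : Type*} [MetricSpace X] [CompactSpace X] (f g : X ≃ₜ X) (O : Set X)
    (hO : IsCompact O) (hsupp : closure {x | f x ≠ g x} ⊆ O) :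
    (⇑f '' O ⊆ interior O ↔ ⇑g '' O ⊆ interior O) := by
  have key : ∀ (f g : X ≃ₜ X), closure {x | f x ≠ g x} ⊆ O →
      (⇑f '' O ⊆ interior O) → ⇑g '' O ⊆ interior O := by
    intro f g hs hf
    rintro _ ⟨x, hx, rfl⟩
    by_cases hz : f.symm (g x) ∈ O
    · exact hf ⟨_, hz, f.apply_symm_apply _⟩
    · exfalso
      have hne : f (f.symm (g x)) = g (f.symm (g x)) := by
        by_contra h
        exact hz (hs (subset_closure h))
      have h2 : g x = g (f.symm (g x)) := by rw [← hne, f.apply_symm_apply]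
      have h3 := g.injective h2
      exact hz (h3 ▸ hx)
  constructor
  · exact key f g hsupp
  · exact key g f (by simpa [ne_comm] using hsupp)
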